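/- For every rooted tree T with n ≥ 2 nodes and every k with 1 ≤ k ≤ n−2, the number c(T,k) of transversals of size k satisfies c(T,k) ≥ binom(n−1,k−1). -/

import Mathlib

open Finset

/-- A rooted tree on node set `Fin n`, given by a parent function.
The root is its own parent, and iterating the parent function from any
node eventually reaches the root. -/
structure RTree (n : ℕ) where
  root : Fin n
  parent : Fin n → Fin n
  parent_root : parent root = root
  reaches_root : ∀ v, ∃ k, parent^[k] v = root

namespace RTree

variable {n : ℕ}

/-- `y` is an ancestor of `v` (possibly `y = v`): `y` lies on the
root-to-`v` path. -/
def Ancestor (T : RTree n) (y v : Fin n) : Prop :=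
  ∃ k, T.parent^[k] v = y

/-- `u` is a child of `v`. -/
def IsChild (T : RTree n) (u v : Fin n) : Prop :=
  u ≠ T.root ∧ T.parent u = v

/-- A node is internal if it has at least one child. -/
def IsInternal (T : RTree n) (v : Fin n) : Prop :=
  ∃ u, T.IsChild u v

/-- A leaf is a node with no children. -/
def IsLeaf (T : RTree n) (v : Fin n) : Prop :=
  ¬ T.IsInternal v

open scoped Classical in
noncomputable def children (T : RTree n) (v : Fin n) : Finset (Fin n) :=
  Finset.univ.filter (fun u => T.IsChild u v)

open scoped Classical in
noncomputable def leaves (T : RTree n) : Finset (Fin n) :=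
  Finset.univ.filter (fun v => T.IsLeaf v)

/-- A transversal is a set of nodes meeting every root-to-leaf path. -/
def IsTransversal (T : RTree n) (S : Finset (Fin n)) : Prop :=
  ∀ ℓ, T.IsLeaf ℓ → ∃ v ∈ S, T.Ancestor v ℓ

open scoped Classical in
/-- `c T k` is the number of transversals of size `k` in `T`. -/
noncomputable def c (T : RTree n) (k : ℕ) : ℕ :=
  ((Finset.univ.powersetCard k).filter (fun S => T.IsTransversal S)).card

/-- A caterpillar: the internal nodes form a chain under the ancestor
relation (equivalently, removing all leaves yields a rooted tree with
precisely one leaf). -/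
def IsCaterpillar (T : RTree n) : Prop :=
  ∀ v w, T.IsInternal v → T.IsInternal w → T.Ancestor v w ∨ T.Ancestor w v

/-- A full caterpillar of degree `d`: a caterpillar in which every internal
node, except possibly the lowest one, has precisely `d` children (and no node
has more than `d` children). -/
def IsFullCaterpillar (T : RTree n) (d : ℕ) : Prop :=
  T.IsCaterpillar ∧ (∀ v, (T.children v).card ≤ d) ∧
    ∀ v, (∃ w, T.IsInternal w ∧ T.IsChild w v) → (T.children v).card = d

/-- Isomorphism of rooted trees on `Fin n`. -/
def Isomorphic (T T' : RTree n) : Prop :=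
  ∃ e : Fin n ≃ Fin n, e T.root = T'.root ∧ ∀ v, e (T.parent v) = T'.parent (e v)

end RTree

open RTree

theorem stmt3 (n : ℕ) (hn : 2 ≤ n) (T : RTree n) :
    ∀ k, 1 ≤ k → k ≤ n - 2 → (n - 1).choose (k - 1) ≤ T.c k := by
  classical
  intro k hk1 hk2
  -- count subsets of size k-1 of univ.erase root; inserting root gives transversals
  have hcard : ((Finset.univ.erase T.root).powersetCard (k - 1)).card
      = (n - 1).choose (k - 1) := by
    rw [Finset.card_powersetCard, Finset.card_erase_of_mem (Finset.mem_univ _),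
      Finset.card_univ, Fintype.card_fin]
  rw [RTree.c, ← hcard]
  apply Finset.card_le_card_of_injOn (fun A => insert T.root A)
  · intro A hA
    simp only [Finset.mem_coe, Finset.mem_powersetCard] at hA
    obtain ⟨hsub, hcardA⟩ := hA
    have hroot_not : T.root ∉ A := fun h => (Finset.mem_erase.mp (hsub h)).1 rfl
    simp only [Finset.mem_coe, Finset.mem_filter, Finset.mem_powersetCard]
    refine ⟨⟨fun x _ => Finset.mem_univ x, ?_⟩, ?_⟩
    · rw [Finset.card_insert_of_notMem hroot_not, hcardA]
      omega
    · intro ℓ _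
      exact ⟨T.root, Finset.mem_insert_self _ _, T.reaches_root ℓ⟩
  · intro A hA B hB hAB
    simp only [Finset.mem_coe, Finset.mem_powersetCard] at hA hB
    have hAr : T.root ∉ A := fun h => (Finset.mem_erase.mp (hA.1 h)).1 rfl
    have hBr : T.root ∉ B := fun h => (Finset.mem_erase.mp (hB.1 h)).1 rfl
    have := congrArg (fun S => S.erase T.root) hAB
    simpa [Finset.erase_insert hAr, Finset.erase_insert hBr] using this
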